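/- Let (Q,I) be a special biserial bound quiver with associated set R of binomial relations. Then dim_k S ≤ χ(Q), where S is the semisimple ideal spanned by the classes of paths in binomial relations (so dim_k S = |R|) and χ(Q) = |Q_1| - |Q_0| + N is the Euler characteristic of Q (N the number of connected components). -/

import Mathlib

open Classical

noncomputable section

/-- A finite quiver: finite sets of vertices and arrows with source and target maps. -/
structure FQuiver where
  V : Type
  A : Type
  [fintV : Fintype V]
  [decV : DecidableEq V]
  [fintA : Fintype A]
  [decA : DecidableEq A]
  src : A → V
  tgt : A → V

attribute [instance] FQuiver.fintV FQuiver.decV FQuiver.fintA FQuiver.decA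

namespace FQuiver

variable {Q : FQuiver}

/-- Oriented paths in a quiver. -/
inductive Path (Q : FQuiver) : Q.V → Q.V → Type
  | nil (v : Q.V) : Path Q v v
  | cons (a : Q.A) {w : Q.V} (p : Path Q (Q.tgt a) w) : Path Q (Q.src a) w

/-- Composition (concatenation) of paths. -/
def Path.comp : ∀ {u v w : Q.V}, Path Q u v → Path Q v w → Path Q u w
  | _, _, _, .nil _, q => q
  | _, _, _, .cons a p, q => .cons a (Path.comp p q)

/-- Length of a path. -/
def Path.length : ∀ {u v : Q.V}, Path Q u v → ℕ
  | _, _, .nil _ => 0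
  | _, _, .cons _ p => Path.length p + 1

/-- The list of arrows of a path, in order. -/
def Path.arrows : ∀ {u v : Q.V}, Path Q u v → List Q.A
  | _, _, .nil _ => []
  | _, _, .cons a p => a :: Path.arrows p

/-- An arrow regarded as a path of length one. -/
def arrow (Q : FQuiver) (a : Q.A) : Path Q (Q.src a) (Q.tgt a) := .cons a (.nil _)

/-- Power of an oriented cycle. -/
def Path.pow {x : Q.V} (c : Path Q x x) : ℕ → Path Q x x
  | 0 => .nil x
  | n + 1 => c.comp (Path.pow c n)

/-- Transport a path along equalities of its endpoints. -/
def Path.cast {u u' v v' : Q.V} (hu : u = u') (hv : v = v') (p : Path Q u v) :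
    Path Q u' v' := by subst hu; subst hv; exact p

/-- The length-two path `ab` formed by two composable arrows. -/
def comp2 (a b : Q.A) (h : Q.src b = Q.tgt a) : Path Q (Q.src a) (Q.tgt b) :=
  (arrow Q a).comp ((arrow Q b).cast h rfl)

/-- The set of all paths of a quiver, bundled with their endpoints. -/
def PathsSigma (Q : FQuiver) : Type := Σ (u : Q.V) (v : Q.V), Path Q u v

/-- The underlying vector space of the path algebra `kQ`: the free `k`-module on paths. -/
abbrev PAlg (k : Type) [Field k] (Q : FQuiver) : Type := PathsSigma Q →₀ k

/-- The basis vector of `kQ` corresponding to a path. -/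
def pvec (k : Type) [Field k] {u v : Q.V} (p : Path Q u v) : PAlg k Q :=
  Finsupp.single ⟨u, v, p⟩ 1

/-- Left multiplication of an element of `kQ` by a path. -/
def lmul (k : Type) [Field k] {u v : Q.V} (p : Path Q u v) (x : PAlg k Q) : PAlg k Q :=
  x.sum fun s c => if h : s.1 = v then c • pvec k (p.comp ((Sigma.snd (Sigma.snd s)).cast h rfl)) else 0

/-- Right multiplication of an element of `kQ` by a path. -/
def rmul (k : Type) [Field k] {u v : Q.V} (x : PAlg k Q) (p : Path Q u v) : PAlg k Q :=
  x.sum fun s c => if h : s.2.1 = u then c • pvec k (Path.comp ((Sigma.snd (Sigma.snd s)).cast rfl h) p) else 0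

/-- The two-sided ideal of `kQ` generated by a set of elements. -/
def idealGen (k : Type) [Field k] (Q : FQuiver) (s : Set (PAlg k Q)) : Submodule k (PAlg k Q) :=
  sInf {M : Submodule k (PAlg k Q) |
    s ⊆ (M : Set (PAlg k Q)) ∧
    ∀ (u v : Q.V) (p : Path Q u v) (x : PAlg k Q), x ∈ M → lmul k p x ∈ M ∧ rmul k x p ∈ M}

/-- An admissible (two-sided) ideal `(kQ⁺)ᵐ ⊆ I ⊆ (kQ⁺)²` of the path algebra. -/
structure AdmissibleIdeal (k : Type) [Field k] (Q : FQuiver) where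
  I : Submodule k (PAlg k Q)
  lmul_mem : ∀ {u v : Q.V} (p : Path Q u v) {x : PAlg k Q}, x ∈ I → lmul k p x ∈ I
  rmul_mem : ∀ {u v : Q.V} (p : Path Q u v) {x : PAlg k Q}, x ∈ I → rmul k x p ∈ I
  bound : ℕ
  two_le_bound : 2 ≤ bound
  pow_le : ∀ {u v : Q.V} (p : Path Q u v), bound ≤ p.length → pvec k p ∈ I
  le_sq : ∀ x ∈ I, ∀ s ∈ x.support, 2 ≤ (Sigma.snd (Sigma.snd s)).length

/-- A special biserial bound quiver `(Q, I)`. -/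
structure SpecialBiserial (k : Type) [Field k] (Q : FQuiver) extends AdmissibleIdeal k Q where
  src_card : ∀ v : Q.V, Fintype.card {a : Q.A // Q.src a = v} ≤ 2
  tgt_card : ∀ v : Q.V, Fintype.card {a : Q.A // Q.tgt a = v} ≤ 2
  unique_succ : ∀ (a b c : Q.A) (hb : Q.src b = Q.tgt a) (hc : Q.src c = Q.tgt a),
      pvec k (comp2 a b hb) ∉ I → pvec k (comp2 a c hc) ∉ I → b = c
  unique_pred : ∀ (a b c : Q.A) (hb : Q.tgt b = Q.src a) (hc : Q.tgt c = Q.src a),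
      pvec k (comp2 b a hb.symm) ∉ I → pvec k (comp2 c a hc.symm) ∉ I → b = c

/-- A binomial relation `u - λv ∈ I` between distinct parallel paths not in `I`. -/
structure BinRel {k : Type} [Field k] {Q : FQuiver} (J : AdmissibleIdeal k Q) where
  s : Q.V
  t : Q.V
  u : Path Q s t
  v : Path Q s t
  coef : k
  coef_ne : coef ≠ 0
  u_ne_v : u ≠ v
  u_not_mem : pvec k u ∉ J.I
  v_not_mem : pvec k v ∉ J.I
  rel_mem : pvec k u - coef • pvec k v ∈ J.I

/-- `I` is generated by a set of paths (monomial relations) together with the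
binomial relations in `R`. -/
def Generates {k : Type} [Field k] {Q : FQuiver} (J : AdmissibleIdeal k Q)
    (R : Set (BinRel J)) : Prop :=
  ∃ P : Set (PathsSigma Q),
    (∀ s ∈ P, pvec k (Sigma.snd (Sigma.snd s)) ∈ J.I) ∧
    J.I = idealGen k Q
      (((fun s : PathsSigma Q => pvec k (Sigma.snd (Sigma.snd s))) '' P) ∪
       ((fun r : BinRel J => pvec k r.u - r.coef • pvec k r.v) '' R))

/-- The ideal `S ⊆ A = kQ/I`: the span of the residue classes of the paths occurring
in the binomial relations of `R`. -/
def Smod {k : Type} [Field k] {Q : FQuiver} (J : AdmissibleIdeal k Q) (R : Set (BinRel J)) :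
    Submodule k (PAlg k Q ⧸ J.I) :=
  Submodule.span k
    ((fun r : BinRel J => (Submodule.Quotient.mk (pvec k r.u) : PAlg k Q ⧸ J.I)) '' R)

/-- Number of connected components of the underlying graph of `Q`. -/
def numComponents (Q : FQuiver) : ℕ :=
  Nat.card (Quot (fun u v : Q.V => ∃ a : Q.A, Q.src a = u ∧ Q.tgt a = v))

/-- A quiver is acyclic (triangular) if it has no nontrivial oriented cycle. -/
def Acyclic (Q : FQuiver) : Prop := ∀ (x : Q.V) (p : Path Q x x), p.length = 0

/-- A simple cycle: a nontrivial oriented cycle visiting no vertex twice. -/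
def IsSimpleCycle {x : Q.V} (p : Path Q x x) : Prop :=
  p.length ≠ 0 ∧ (p.arrows.map Q.src).Nodup

/-- `dim_k S = χ(Q)`, written additively: `dim S + |Q₀| = |Q₁| + N`. -/
def EulerEq {k : Type} [Field k] {Q : FQuiver} (J : AdmissibleIdeal k Q)
    (R : Set (BinRel J)) : Prop :=
  Module.finrank k ↥(Smod J R) + Fintype.card Q.V = Fintype.card Q.A + numComponents Q

/-- The word in the free group on the arrows determined by a path. -/
def pathWord (Q : FQuiver) {u v : Q.V} (p : Path Q u v) : FreeGroup Q.A :=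
  (p.arrows.map FreeGroup.of).prod

/-- `T` is a spanning tree of (the underlying graph of) `Q`. -/
def IsSpanningTree (Q : FQuiver) (T : Set Q.A) : Prop :=
  (∀ u v : Q.V,
      Quot.mk (fun a b : Q.V => ∃ e ∈ T, Q.src e = a ∧ Q.tgt e = b) u =
      Quot.mk (fun a b : Q.V => ∃ e ∈ T, Q.src e = a ∧ Q.tgt e = b) v) ∧
  Nat.card T + 1 = Fintype.card Q.V

/-- The fundamental group of the bound quiver `(Q, I)` (for connected `Q`,
with respect to a spanning tree `T`): the free group on the arrows modulo the
tree arrows and the homotopy relations coming from the binomial relations. -/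
abbrev pi1 {k : Type} [Field k] {Q : FQuiver} (J : AdmissibleIdeal k Q)
    (T : Set Q.A) (R : Set (BinRel J)) : Type :=
  FreeGroup Q.A ⧸ Subgroup.normalClosure
    ((FreeGroup.of '' T) ∪
     ((fun r : BinRel J => pathWord Q r.u * (pathWord Q r.v)⁻¹) '' R))

end FQuiver


namespace FQuiver

/-! ### Auxiliary development for stmt7 -/

variable {Q : FQuiver}

namespace Path

@[simp] theorem cast_rfl {u v : Q.V} (p : Path Q u v) : p.cast rfl rfl = p := rfl

theorem cast_prf {u u' v v' : Q.V} (h1 h1' : u = u') (h2 h2' : v = v') (p : Path Q u v) :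
    p.cast h1 h2 = p.cast h1' h2' := rfl

@[simp] theorem comp_nil {u v : Q.V} (p : Path Q u v) : p.comp (Path.nil v) = p := by
  induction p with
  | nil => rfl
  | cons a p ih => simp [Path.comp, ih]

@[simp] theorem nil_comp {u v : Q.V} (p : Path Q u v) : (Path.nil u).comp p = p := rfl

theorem cons_comp {u v : Q.V} (a : Q.A) (p : Path Q (Q.tgt a) u) (q : Path Q u v) :
    (Path.cons a p).comp q = Path.cons a (p.comp q) := rfl

theorem arrow_comp (a : Q.A) {v : Q.V} (p : Path Q (Q.tgt a) v) :
    (arrow Q a).comp p = Path.cons a p := rfl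

theorem comp_assoc {u v w z : Q.V} (p : Path Q u v) (q : Path Q v w) (r : Path Q w z) :
    (p.comp q).comp r = p.comp (q.comp r) := by
  induction p with
  | nil => rfl
  | cons a p ih => simp [Path.comp, cons_comp, ih]

@[simp] theorem length_comp {u v w : Q.V} (p : Path Q u v) (q : Path Q v w) :
    (p.comp q).length = p.length + q.length := by
  induction p with
  | nil => simp [Path.comp, Path.length]
  | cons a p ih => simp [Path.comp, Path.length, ih]; omega

@[simp] theorem arrows_comp {u v w : Q.V} (p : Path Q u v) (q : Path Q v w) :
    (p.comp q).arrows = p.arrows ++ q.arrows := by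
  induction p with
  | nil => rfl
  | cons a p ih => simp [Path.comp, Path.arrows, ih]

@[simp] theorem length_eq_arrows {u v : Q.V} (p : Path Q u v) :
    p.arrows.length = p.length := by
  induction p with
  | nil => rfl
  | cons a p ih => simp [Path.arrows, Path.length, ih]

theorem cast_cons {v v' : Q.V} (a : Q.A) (p : Path Q (Q.tgt a) v) (h : v = v') :
    (Path.cons a p).cast rfl h = Path.cons a (p.cast rfl h) := by subst h; rfl

theorem cast_comp_left {u u' v w : Q.V} (h : u = u') (p : Path Q u v) (q : Path Q v w) :
    (p.cast h rfl).comp q = (p.comp q).cast h rfl := by subst h; rfl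

theorem cast_comp_right {u v w w' : Q.V} (h : w = w') (p : Path Q u v) (q : Path Q v w) :
    p.comp (q.cast rfl h) = (p.comp q).cast rfl h := by subst h; rfl

theorem comp_cast_mid {u v v' w : Q.V} (h : v = v') (p : Path Q u v) (q : Path Q v' w) :
    (p.cast rfl h).comp q = p.comp (q.cast h.symm rfl) := by subst h; rfl

@[simp] theorem arrows_cast {u u' v v' : Q.V} (h1 : u = u') (h2 : v = v') (p : Path Q u v) :
    (p.cast h1 h2).arrows = p.arrows := by subst h1; subst h2; rfl

@[simp] theorem length_cast {u u' v v' : Q.V} (h1 : u = u') (h2 : v = v') (p : Path Q u v) :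
    (p.cast h1 h2).length = p.length := by subst h1; subst h2; rfl

/-- Destructing a path whose arrow list is `[]`. -/
theorem exists_nil {u v : Q.V} (p : Path Q u v) (h : p.arrows = []) :
    ∃ e : u = v, p = (Path.nil u).cast rfl e := by
  cases p with
  | nil => exact ⟨rfl, rfl⟩
  | cons a p => simp [Path.arrows] at h

theorem exists_nil_of_length {u v : Q.V} (p : Path Q u v) (h : p.length = 0) :
    ∃ e : u = v, p = (Path.nil u).cast rfl e := by
  apply exists_nil; have := length_eq_arrows p; rw [h] at this
  exact List.length_eq_zero_iff.mp this

/-- Destructing a path whose arrow list is `b :: t`. -/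
theorem exists_cons {u v : Q.V} (p : Path Q u v) {b : Q.A} {t : List Q.A}
    (h : p.arrows = b :: t) :
    ∃ (e : u = Q.src b) (p'' : Path Q (Q.tgt b) v),
      p''.arrows = t ∧ p = ((Path.cons b p'').cast e.symm rfl) := by
  cases p with
  | nil => simp [Path.arrows] at h
  | cons a p =>
    simp only [Path.arrows, List.cons.injEq] at h
    obtain ⟨rfl, ht⟩ := h
    exact ⟨rfl, p, ht, rfl⟩

/-- Destructing a path whose arrow list is `t ++ [l]`. -/
theorem exists_snoc {u v : Q.V} (p : Path Q u v) {l : Q.A} {t : List Q.A}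
    (h : p.arrows = t ++ [l]) :
    ∃ (e : Q.tgt l = v) (p₁ : Path Q u (Q.src l)),
      p₁.arrows = t ∧ p = ((p₁.comp (arrow Q l)).cast rfl e) := by
  induction p generalizing t with
  | nil => simp [Path.arrows] at h
  | cons a p ih =>
    simp only [Path.arrows] at h
    cases t with
    | nil =>
      simp only [List.nil_append, List.cons.injEq] at h
      obtain ⟨rfl, ht⟩ := h
      obtain ⟨e, hp⟩ := exists_nil p ht
      refine ⟨e, Path.nil (Q.src a), rfl, ?_⟩
      rw [hp]
      show Path.cons a _ = ((arrow Q a).cast rfl e)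
      rw [show arrow Q a = Path.cons a (Path.nil (Q.tgt a)) from rfl, cast_cons]
    | cons c t' =>
      simp only [List.cons_append, List.cons.injEq] at h
      obtain ⟨rfl, ht⟩ := h
      obtain ⟨e, p₂, harr, hp⟩ := ih ht
      refine ⟨e, Path.cons a p₂, by simp [Path.arrows, harr], ?_⟩
      rw [hp, cons_comp, cast_cons]

end Path

section Algebra

variable {k : Type} [Field k]

@[simp] theorem pvec_cast {u u' v v' : Q.V} (h1 : u = u') (h2 : v = v') (p : Path Q u v) :
    pvec k (p.cast h1 h2) = pvec k p := by subst h1; subst h2; rfl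

theorem lmul_pvec {u v w : Q.V} (p : Path Q u v) (q : Path Q v w) :
    lmul k p (pvec k q) = pvec k (p.comp q) := by
  unfold lmul pvec
  erw [Finsupp.sum_single_index]
  · rw [dif_pos rfl, one_smul]; rfl
  · split <;> simp

theorem rmul_pvec {u v w : Q.V} (q : Path Q u v) (p : Path Q v w) :
    rmul k (pvec k q) p = pvec k (q.comp p) := by
  unfold rmul pvec
  erw [Finsupp.sum_single_index]
  · rw [dif_pos rfl, one_smul]; rfl
  · split <;> simp

theorem lmul_sub {u v : Q.V} (p : Path Q u v) (x y : PAlg k Q) :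
    lmul k p (x - y) = lmul k p x - lmul k p y := by
  unfold lmul
  apply Finsupp.sum_sub_index
  intro s c1 c2
  split <;> simp [sub_smul]

theorem rmul_sub {u v : Q.V} (p : Path Q u v) (x y : PAlg k Q) :
    rmul k (x - y) p = rmul k x p - rmul k y p := by
  unfold rmul
  apply Finsupp.sum_sub_index
  intro s c1 c2
  split <;> simp [sub_smul]

theorem lmul_smul {u v : Q.V} (p : Path Q u v) (c : k) (x : PAlg k Q) :
    lmul k p (c • x) = c • lmul k p x := by
  unfold lmul
  rw [Finsupp.sum_smul_index, Finsupp.smul_sum]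
  · apply Finsupp.sum_congr
    intro s _
    split <;> simp [mul_smul]
  · intro s; split <;> simp

theorem rmul_smul {u v : Q.V} (p : Path Q u v) (c : k) (x : PAlg k Q) :
    rmul k (c • x) p = c • rmul k x p := by
  unfold rmul
  rw [Finsupp.sum_smul_index, Finsupp.smul_sum]
  · apply Finsupp.sum_congr
    intro s _
    split <;> simp [mul_smul]
  · intro s; split <;> simp

variable {J : AdmissibleIdeal k Q}

theorem mem_lcomp {u v w : Q.V} (p : Path Q u v) {q : Path Q v w} (h : pvec k q ∈ J.I) :
    pvec k (p.comp q) ∈ J.I := by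
  rw [← lmul_pvec]; exact J.lmul_mem p h

theorem mem_rcomp {u v w : Q.V} {q : Path Q u v} (p : Path Q v w) (h : pvec k q ∈ J.I) :
    pvec k (q.comp p) ∈ J.I := by
  rw [← rmul_pvec]; exact J.rmul_mem p h

theorem not_mem_left {u v w : Q.V} {p : Path Q u v} {q : Path Q v w}
    (h : pvec k (p.comp q) ∉ J.I) : pvec k q ∉ J.I :=
  fun hq => h (mem_lcomp p hq)

theorem not_mem_right {u v w : Q.V} {p : Path Q u v} {q : Path Q v w}
    (h : pvec k (p.comp q) ∉ J.I) : pvec k p ∉ J.I :=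
  fun hp => h (mem_rcomp q hp)

theorem comp2_comp {a b : Q.A} (h : Q.src b = Q.tgt a) {z : Q.V} (p'' : Path Q (Q.tgt b) z) :
    (comp2 a b h).comp p'' = Path.cons a ((Path.cons b p'').cast h rfl) := by
  show ((arrow Q a).comp ((arrow Q b).cast h rfl)).comp p'' = _
  rw [Path.comp_assoc, Path.cast_comp_left, Path.arrow_comp, Path.arrow_comp]

end Algebra

section Extract

variable {k : Type} [Field k] {J : AdmissibleIdeal k Q}

/-- Extraction of a length-two subpath avoiding `I` from two consecutive arrows of a path
avoiding `I`. -/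
theorem pair_extract {u v : Q.V} {p : Path Q u v} (hp : pvec k p ∉ J.I) {a b : Q.A}
    (hab : [a, b] <:+: p.arrows) :
    ∃ h : Q.src b = Q.tgt a, pvec k (comp2 a b h) ∉ J.I := by
  induction p with
  | nil => simp [Path.arrows] at hab
  | cons c p' ih =>
    have harr : (Path.cons c p').arrows = c :: p'.arrows := rfl
    rw [harr] at hab
    have hp' : pvec k p' ∉ J.I := by
      intro hmem
      exact hp (by
        have h2 := mem_lcomp (J := J) (arrow Q c) hmem
        rwa [Path.arrow_comp] at h2)
    rcases List.infix_cons_iff.mp hab with hpre | hinf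
    · obtain ⟨t', ht'⟩ := hpre
      simp only [List.cons_append, List.nil_append, List.cons.injEq] at ht'
      obtain ⟨rfl, harr2⟩ := ht'
      obtain ⟨e, p'', ht'', hp''⟩ := Path.exists_cons p' harr2.symm
      refine ⟨e.symm, ?_⟩
      intro hmem
      apply hp
      have h1 : pvec k ((comp2 a b e.symm).comp p'') ∈ J.I := mem_rcomp p'' hmem
      rwa [comp2_comp, ← hp''] at h1
    · exact ih hp' hinf

end Extract

section Power

variable {k : Type} [Field k] {J : AdmissibleIdeal k Q}

theorem length_pow {s : Q.V} (w : Path Q s s) (n : ℕ) :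
    (w.pow n).length = n * w.length := by
  induction n with
  | zero => simp [Path.pow, Path.length]
  | succ n ih => show (w.comp (w.pow n)).length = _; rw [Path.length_comp, ih]; ring

/-- The power trick: a nontrivial cycle `w` with `w ∘ v ≡ c v (mod I)`, `v ∉ I`, is
impossible in an admissible ideal. -/
theorem power_lemma {s t : Q.V} {w : Path Q s s} {v : Path Q s t} {c : k}
    (hc : c ≠ 0) (hw : w.length ≠ 0) (hv : pvec k v ∉ J.I)
    (hrel : pvec k (w.comp v) - c • pvec k v ∈ J.I) : False := by
  have key : ∀ n : ℕ, pvec k ((w.pow n).comp v) - (c ^ n) • pvec k v ∈ J.I := by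
    intro n
    induction n with
    | zero =>
      show pvec k ((Path.nil s).comp v) - (c ^ 0) • pvec k v ∈ J.I
      rw [Path.nil_comp, pow_zero, one_smul, sub_self]
      exact Submodule.zero_mem _
    | succ n ih =>
      have h1 := J.lmul_mem w ih
      rw [lmul_sub, lmul_smul, lmul_pvec, lmul_pvec] at h1
      have h2 : (c ^ n) • (pvec k (w.comp v) - c • pvec k v) ∈ J.I :=
        Submodule.smul_mem _ _ hrel
      rw [smul_sub, smul_smul, ← pow_succ] at h2
      have h3 := Submodule.add_mem _ h1 h2
      rw [sub_add_sub_cancel] at h3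
      have heq : w.comp ((w.pow n).comp v) = (w.pow (n + 1)).comp v := by
        show _ = (w.comp (w.pow n)).comp v
        rw [Path.comp_assoc]
      rwa [heq] at h3
  have hlong : pvec k ((w.pow J.bound).comp v) ∈ J.I := by
    apply J.pow_le
    rw [Path.length_comp, length_pow]
    have : 1 ≤ w.length := Nat.one_le_iff_ne_zero.mpr hw
    calc J.bound ≤ J.bound * w.length := Nat.le_mul_of_pos_right _ (by omega)
    _ ≤ J.bound * w.length + v.length := Nat.le_add_right _ _
  have : (c ^ J.bound) • pvec k v ∈ J.I := by
    have h4 := Submodule.sub_mem _ hlong (key J.bound)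
    rwa [sub_sub_cancel] at h4
  exact hv (by
    have h5 := Submodule.smul_mem _ ((c ^ J.bound)⁻¹) this
    rwa [smul_smul, inv_mul_cancel₀ (pow_ne_zero _ hc), one_smul] at h5)

end Power

section Dich

variable {k : Type} [Field k] {SB : SpecialBiserial k Q}

/-- Forward dichotomy: two paths avoiding `I` with the same first arrow are
prefix-comparable. -/
theorem fwd_dich : ∀ (n : ℕ) {s x y : Q.V} (p : Path Q s x) (q : Path Q s y),
    p.length ≤ n → pvec k p ∉ SB.I → pvec k q ∉ SB.I →
    p.length ≠ 0 → q.length ≠ 0 → p.arrows.head? = q.arrows.head? →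
    (∃ w : Path Q x y, q = p.comp w) ∨ (∃ w : Path Q y x, p = q.comp w) := by
  intro n
  induction n with
  | zero => intro s x y p q hn _ _ hp0 _ _; omega
  | succ n ih =>
    intro s x y p q hn hpI hqI hp0 hq0 hhead
    have hpne : p.arrows ≠ [] := by
      intro h; rw [← Path.length_eq_arrows, h] at hp0; simp at hp0
    have hqne : q.arrows ≠ [] := by
      intro h; rw [← Path.length_eq_arrows, h] at hq0; simp at hq0
    obtain ⟨a, tp, harrp⟩ := List.exists_cons_of_ne_nil hpne
    obtain ⟨e, p₁, harrp₁, hpeq0⟩ := Path.exists_cons p harrp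
    subst e
    have hpeq : p = Path.cons a p₁ := hpeq0
    obtain ⟨a', tq, harrq⟩ := List.exists_cons_of_ne_nil hqne
    have haa : a' = a := by
      rw [harrp, harrq] at hhead; simpa using hhead.symm
    rw [haa] at harrq
    obtain ⟨e', q₁, harrq₁, hqeq0⟩ := Path.exists_cons q harrq
    have hqeq : q = Path.cons a q₁ := hqeq0
    by_cases hp₁0 : p₁.length = 0
    · obtain ⟨ex, hnil⟩ := Path.exists_nil_of_length p₁ hp₁0
      subst ex
      have hnil' : p₁ = Path.nil (Q.tgt a) := hnil
      left
      exact ⟨q₁, by rw [hqeq, hpeq, hnil', Path.cons_comp, Path.nil_comp]⟩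
    by_cases hq₁0 : q₁.length = 0
    · obtain ⟨ex, hnil⟩ := Path.exists_nil_of_length q₁ hq₁0
      subst ex
      have hnil' : q₁ = Path.nil (Q.tgt a) := hnil
      right
      exact ⟨p₁, by rw [hqeq, hpeq, hnil', Path.cons_comp, Path.nil_comp]⟩
    -- both nonempty
    have hp₁ne : p₁.arrows ≠ [] := by
      intro h; rw [← Path.length_eq_arrows, h] at hp₁0; simp at hp₁0
    have hq₁ne : q₁.arrows ≠ [] := by
      intro h; rw [← Path.length_eq_arrows, h] at hq₁0; simp at hq₁0
    obtain ⟨b, tp₁, harrp2⟩ := List.exists_cons_of_ne_nil hp₁ne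
    obtain ⟨b', tq₁, harrq2⟩ := List.exists_cons_of_ne_nil hq₁ne
    have hinfp : [a, b] <:+: p.arrows := by
      rw [hpeq]
      show [a, b] <:+: a :: p₁.arrows
      rw [harrp2]
      exact ⟨[], tp₁, rfl⟩
    have hinfq : [a, b'] <:+: q.arrows := by
      rw [hqeq]
      show [a, b'] <:+: a :: q₁.arrows
      rw [harrq2]
      exact ⟨[], tq₁, rfl⟩
    obtain ⟨h1, hne1⟩ := pair_extract hpI hinfp
    obtain ⟨h2, hne2⟩ := pair_extract hqI hinfq
    have hbb : b = b' := SB.unique_succ a b b' h1 h2 hne1 hne2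
    subst hbb
    have hp₁I : pvec k p₁ ∉ SB.I := by
      rw [hpeq, show Path.cons a p₁ = (arrow Q a).comp p₁ from rfl] at hpI
      exact not_mem_left hpI
    have hq₁I : pvec k q₁ ∉ SB.I := by
      rw [hqeq, show Path.cons a q₁ = (arrow Q a).comp q₁ from rfl] at hqI
      exact not_mem_left hqI
    have hlen : p₁.length ≤ n := by
      rw [hpeq] at hn
      have : (Path.cons a p₁).length = p₁.length + 1 := rfl
      omega
    have hheads : p₁.arrows.head? = q₁.arrows.head? := by
      rw [harrp2, harrq2]; rfl
    rcases ih p₁ q₁ hlen hp₁I hq₁I hp₁0 hq₁0 hheads with ⟨w, hw⟩ | ⟨w, hw⟩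
    · left
      exact ⟨w, by rw [hqeq, hpeq, Path.cons_comp, ← hw]⟩
    · right
      exact ⟨w, by rw [hqeq, hpeq, Path.cons_comp, ← hw]⟩

/-- Backward dichotomy: two paths avoiding `I` with the same last arrow are
suffix-comparable. -/
theorem bwd_dich : ∀ (n : ℕ) {s s' t : Q.V} (p : Path Q s t) (q : Path Q s' t),
    p.length ≤ n → pvec k p ∉ SB.I → pvec k q ∉ SB.I →
    p.length ≠ 0 → q.length ≠ 0 → p.arrows.getLast? = q.arrows.getLast? →
    (∃ w : Path Q s' s, q = w.comp p) ∨ (∃ w : Path Q s s', p = w.comp q) := by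
  intro n
  induction n with
  | zero => intro s s' t p q hn _ _ hp0 _ _; omega
  | succ n ih =>
    intro s s' t p q hn hpI hqI hp0 hq0 hlast
    have hpne : p.arrows ≠ [] := by
      intro h; rw [← Path.length_eq_arrows, h] at hp0; simp at hp0
    have hqne : q.arrows ≠ [] := by
      intro h; rw [← Path.length_eq_arrows, h] at hq0; simp at hq0
    rcases List.eq_nil_or_concat p.arrows with h | ⟨tp, l, harrp⟩
    · exact absurd h hpne
    rw [List.concat_eq_append] at harrp
    obtain ⟨e, p₁, harrp₁, hpeq0⟩ := Path.exists_snoc p harrp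
    subst e
    have hpeq : p = p₁.comp (arrow Q l) := hpeq0
    rcases List.eq_nil_or_concat q.arrows with h | ⟨tq, l', harrq⟩
    · exact absurd h hqne
    rw [List.concat_eq_append] at harrq
    have hll : l' = l := by
      rw [harrp, harrq] at hlast
      simpa [List.getLast?_concat] using hlast.symm
    rw [hll] at harrq
    obtain ⟨e', q₁, harrq₁, hqeq0⟩ := Path.exists_snoc q harrq
    have hqeq : q = q₁.comp (arrow Q l) := hqeq0
    by_cases hp₁0 : p₁.length = 0
    · obtain ⟨ex, hnil⟩ := Path.exists_nil_of_length p₁ hp₁0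
      subst ex
      have hnil' : p₁ = Path.nil (Q.src l) := hnil
      left
      refine ⟨q₁, ?_⟩
      rw [hqeq, hpeq, hnil', Path.nil_comp]
    by_cases hq₁0 : q₁.length = 0
    · obtain ⟨ex, hnil⟩ := Path.exists_nil_of_length q₁ hq₁0
      subst ex
      have hnil' : q₁ = Path.nil (Q.src l) := hnil
      right
      refine ⟨p₁, ?_⟩
      rw [hqeq, hpeq, hnil', Path.nil_comp]
    -- both nonempty
    have hp₁ne : p₁.arrows ≠ [] := by
      intro h; rw [← Path.length_eq_arrows, h] at hp₁0; simp at hp₁0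
    have hq₁ne : q₁.arrows ≠ [] := by
      intro h; rw [← Path.length_eq_arrows, h] at hq₁0; simp at hq₁0
    rcases List.eq_nil_or_concat p₁.arrows with h | ⟨tp₁, lp, harrp2⟩
    · exact absurd h hp₁ne
    rw [List.concat_eq_append] at harrp2
    rcases List.eq_nil_or_concat q₁.arrows with h | ⟨tq₁, lq, harrq2⟩
    · exact absurd h hq₁ne
    rw [List.concat_eq_append] at harrq2
    have hinfp : [lp, l] <:+: p.arrows := by
      rw [hpeq, Path.arrows_comp, harrp2]
      refine ⟨tp₁, [], by simp [arrow, Path.arrows]⟩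
    have hinfq : [lq, l] <:+: q.arrows := by
      rw [hqeq, Path.arrows_comp, harrq2]
      refine ⟨tq₁, [], by simp [arrow, Path.arrows]⟩
    obtain ⟨h1, hne1⟩ := pair_extract hpI hinfp
    obtain ⟨h2, hne2⟩ := pair_extract hqI hinfq
    have hbb : lp = lq := SB.unique_pred l lp lq h1.symm h2.symm hne1 hne2
    subst hbb
    have hp₁I : pvec k p₁ ∉ SB.I := by
      rw [hpeq] at hpI; exact not_mem_right hpI
    have hq₁I : pvec k q₁ ∉ SB.I := by
      rw [hqeq] at hqI; exact not_mem_right hqI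
    have hlen : p₁.length ≤ n := by
      rw [hpeq] at hn
      rw [Path.length_comp] at hn
      have : (arrow Q l).length = 1 := rfl
      omega
    have hlasts : p₁.arrows.getLast? = q₁.arrows.getLast? := by
      rw [harrp2, harrq2, List.getLast?_concat, List.getLast?_concat]
    rcases ih p₁ q₁ hlen hp₁I hq₁I hp₁0 hq₁0 hlasts with ⟨w, hw⟩ | ⟨w, hw⟩
    · left
      exact ⟨w, by rw [hqeq, hpeq, hw, Path.comp_assoc]⟩
    · right
      exact ⟨w, by rw [hqeq, hpeq, hw, Path.comp_assoc]⟩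

end Dich

section PairedSec

variable {k : Type} [Field k]

/-- A path (bundled with its endpoints) occurring in some binomial relation. -/
def Paired (SB : SpecialBiserial k Q) (σ : PathsSigma Q) : Prop :=
  ∃ (τ : PathsSigma Q) (c : k), c ≠ 0 ∧ τ.1 = σ.1 ∧ τ.2.1 = σ.2.1 ∧ τ ≠ σ ∧
    pvec k σ.2.2 ∉ SB.I ∧ pvec k τ.2.2 ∉ SB.I ∧
    pvec k σ.2.2 - c • pvec k τ.2.2 ∈ SB.I

variable {SB : SpecialBiserial k Q}

theorem rel_len₂ {σ τ : PathsSigma Q} (hne : τ ≠ σ) {c : k} (hc : c ≠ 0)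
    (hrel : pvec k (Sigma.snd (Sigma.snd σ)) - c • pvec k (Sigma.snd (Sigma.snd τ)) ∈ SB.I) :
    2 ≤ (Sigma.snd (Sigma.snd σ)).length ∧ 2 ≤ (Sigma.snd (Sigma.snd τ)).length := by
  have hσs : pvec k (Sigma.snd (Sigma.snd σ)) = Finsupp.single σ 1 := rfl
  have hτs : pvec k (Sigma.snd (Sigma.snd τ)) = Finsupp.single τ 1 := rfl
  constructor
  · apply SB.le_sq _ hrel σ
    rw [Finsupp.mem_support_iff, Finsupp.sub_apply, hσs, hτs, Finsupp.smul_apply,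
      Finsupp.single_eq_same, Finsupp.single_eq_of_ne' hne]
    simp
  · apply SB.le_sq _ hrel τ
    rw [Finsupp.mem_support_iff, Finsupp.sub_apply, hσs, hτs, Finsupp.smul_apply,
      Finsupp.single_eq_same, Finsupp.single_eq_of_ne' (Ne.symm hne)]
    simpa using hc

theorem Paired.len {σ : PathsSigma Q} (h : Paired SB σ) : 2 ≤ (Sigma.snd (Sigma.snd σ)).length := by
  obtain ⟨τ, c, hc, h1, h2, hne, hpI, hτI, hrel⟩ := h
  exact (rel_len₂ hne hc hrel).1

/-- The alternative power lemma, with the relation in the other orientation. -/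
theorem power_lemma' {J : AdmissibleIdeal k Q} {s t : Q.V} {w : Path Q s s} {v : Path Q s t}
    {c : k} (hw : w.length ≠ 0) (hv : pvec k v ∉ J.I)
    (hrel : pvec k v - c • pvec k (w.comp v) ∈ J.I) : False := by
  have powcomm : ∀ n : ℕ, (w.pow n).comp w = w.comp (w.pow n) := by
    intro n
    induction n with
    | zero => show ((Path.nil s).comp w) = w.comp (Path.nil s); rw [Path.nil_comp, Path.comp_nil]
    | succ n ih =>
      show ((w.comp (w.pow n)).comp w) = _
      rw [Path.comp_assoc, ih]; rfl
  have key : ∀ n : ℕ, pvec k v - (c ^ n) • pvec k ((w.pow n).comp v) ∈ J.I := by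
    intro n
    induction n with
    | zero =>
      show pvec k v - (c ^ 0) • pvec k ((Path.nil s).comp v) ∈ J.I
      rw [Path.nil_comp, pow_zero, one_smul, sub_self]
      exact Submodule.zero_mem _
    | succ n ih =>
      have h1 := J.lmul_mem (w.pow n) hrel
      rw [lmul_sub, lmul_smul, lmul_pvec, lmul_pvec] at h1
      have h2 : (c ^ n) • (pvec k ((w.pow n).comp v)
          - c • pvec k ((w.pow n).comp (w.comp v))) ∈ J.I :=
        Submodule.smul_mem _ _ h1
      rw [smul_sub, smul_smul, ← pow_succ] at h2
      have h3 := Submodule.add_mem _ ih h2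
      rw [sub_add_sub_cancel] at h3
      have heq : (w.pow n).comp (w.comp v) = (w.pow (n + 1)).comp v := by
        rw [← Path.comp_assoc, powcomm]
        show _ = (w.comp (w.pow n)).comp v
        rw [Path.comp_assoc]
      rwa [heq] at h3
  have hlong : pvec k ((w.pow J.bound).comp v) ∈ J.I := by
    apply J.pow_le
    rw [Path.length_comp, length_pow]
    have : 1 ≤ w.length := Nat.one_le_iff_ne_zero.mpr hw
    calc J.bound ≤ J.bound * w.length := Nat.le_mul_of_pos_right _ (by omega)
    _ ≤ J.bound * w.length + v.length := Nat.le_add_right _ _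
  apply hv
  have h4 := Submodule.add_mem _ (key J.bound)
    (Submodule.smul_mem _ (c ^ J.bound) hlong)
  rwa [sub_add_cancel] at h4

/-- A binomially paired path cannot be extended on the right avoiding `I`. -/
theorem right_max {u x z : Q.V} {p v : Path Q u x} {c : k}
    (hc : c ≠ 0) (hnepv : p ≠ v) (hpI : pvec k p ∉ SB.I) (hvI : pvec k v ∉ SB.I)
    (hplen : p.length ≠ 0) (hvlen : v.length ≠ 0)
    (hrel : pvec k p - c • pvec k v ∈ SB.I)
    {w : Path Q x z} (hw : w.length ≠ 0) (hpw : pvec k (p.comp w) ∉ SB.I) : False := by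
  have hrelw : pvec k (p.comp w) - c • pvec k (v.comp w) ∈ SB.I := by
    have h := SB.rmul_mem w hrel
    rwa [rmul_sub, rmul_smul, rmul_pvec, rmul_pvec] at h
  have hvwI : pvec k (v.comp w) ∉ SB.I := by
    intro hmem
    apply hpw
    have h := Submodule.add_mem _ hrelw (Submodule.smul_mem _ c hmem)
    rwa [sub_add_cancel] at h
  -- last arrows of `p` and `v` are equal
  have hpne : p.arrows ≠ [] := by
    intro h; rw [← Path.length_eq_arrows, h] at hplen; simp at hplen
  have hvne : v.arrows ≠ [] := by
    intro h; rw [← Path.length_eq_arrows, h] at hvlen; simp at hvlen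
  have hwne : w.arrows ≠ [] := by
    intro h; rw [← Path.length_eq_arrows, h] at hw; simp at hw
  rcases List.eq_nil_or_concat p.arrows with h | ⟨tp, lp, harrp⟩
  · exact absurd h hpne
  rw [List.concat_eq_append] at harrp
  rcases List.eq_nil_or_concat v.arrows with h | ⟨tv, lv, harrv⟩
  · exact absurd h hvne
  rw [List.concat_eq_append] at harrv
  obtain ⟨aw, tw, harrw⟩ := List.exists_cons_of_ne_nil hwne
  have hinfp : [lp, aw] <:+: (p.comp w).arrows := by
    rw [Path.arrows_comp, harrp, harrw]
    exact ⟨tp, tw, by simp⟩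
  have hinfv : [lv, aw] <:+: (v.comp w).arrows := by
    rw [Path.arrows_comp, harrv, harrw]
    exact ⟨tv, tw, by simp⟩
  obtain ⟨h1, hne1⟩ := pair_extract hpw hinfp
  obtain ⟨h2, hne2⟩ := pair_extract hvwI hinfv
  have hll : lp = lv := SB.unique_pred aw lp lv h1.symm h2.symm hne1 hne2
  -- suffix dichotomy
  have hlasts : p.arrows.getLast? = v.arrows.getLast? := by
    rw [harrp, harrv, List.getLast?_concat, List.getLast?_concat, hll]
  rcases bwd_dich p.length p v le_rfl hpI hvI hplen hvlen hlasts with ⟨w₂, hw₂⟩ | ⟨w₂, hw₂⟩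
  · -- v = w₂.comp p
    have hw₂len : w₂.length ≠ 0 := by
      intro h0
      obtain ⟨e, hnil⟩ := Path.exists_nil_of_length w₂ h0
      have : w₂ = Path.nil u := hnil
      rw [this, Path.nil_comp] at hw₂
      exact hnepv hw₂.symm
    rw [hw₂] at hrel
    exact power_lemma' hw₂len hpI hrel
  · -- p = w₂.comp v
    have hw₂len : w₂.length ≠ 0 := by
      intro h0
      obtain ⟨e, hnil⟩ := Path.exists_nil_of_length w₂ h0
      have : w₂ = Path.nil u := hnil
      rw [this, Path.nil_comp] at hw₂
      exact hnepv hw₂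
    rw [hw₂] at hrel
    exact power_lemma hc hw₂len hvI hrel

end PairedSec

section HeadInj

variable {k : Type} [Field k] {SB : SpecialBiserial k Q}

theorem Paired.notMem {σ : PathsSigma Q} (h : Paired SB σ) :
    pvec k (Sigma.snd (Sigma.snd σ)) ∉ SB.I := by
  obtain ⟨τ, c, hc, h1, h2, hne, hpI, hτI, hrel⟩ := h
  exact hpI

/-- Two binomially paired paths with the same first arrow are equal. -/
theorem paired_head_inj {σ τ : PathsSigma Q} (hσ : Paired SB σ) (hτ : Paired SB τ)
    (hhead : (Sigma.snd (Sigma.snd σ)).arrows.head? = (Sigma.snd (Sigma.snd τ)).arrows.head?) :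
    σ = τ := by
  have hσlen := hσ.len
  have hτlen := hτ.len
  have hσI := hσ.notMem
  have hτI := hτ.notMem
  obtain ⟨u, x, p⟩ := σ
  obtain ⟨u', y, q⟩ := τ
  simp only at hσlen hτlen hσI hτI hhead
  have hplen : p.length ≠ 0 := by omega
  have hqlen : q.length ≠ 0 := by omega
  have hpne : p.arrows ≠ [] := by
    intro h; rw [← Path.length_eq_arrows, h] at hplen; simp at hplen
  have hqne : q.arrows ≠ [] := by
    intro h; rw [← Path.length_eq_arrows, h] at hqlen; simp at hqlen
  obtain ⟨a, tp, harrp⟩ := List.exists_cons_of_ne_nil hpne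
  obtain ⟨a', tq, harrq⟩ := List.exists_cons_of_ne_nil hqne
  have haa : a' = a := by
    rw [harrp, harrq] at hhead; simpa using hhead.symm
  rw [haa] at harrq
  obtain ⟨e, p₁, _, _⟩ := Path.exists_cons p harrp
  subst e
  obtain ⟨e', q₁, _, _⟩ := Path.exists_cons q harrq
  subst e'
  rcases fwd_dich p.length p q le_rfl hσI hτI hplen hqlen hhead with ⟨w, hw⟩ | ⟨w, hw⟩
  · by_cases hw0 : w.length = 0
    · obtain ⟨ex, hnil⟩ := Path.exists_nil_of_length w hw0
      subst ex
      have hnil' : w = Path.nil x := hnil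
      rw [hnil', Path.comp_nil] at hw
      rw [hw]
    · exfalso
      obtain ⟨τ₀, c, hc, ht1, ht2, htne, hpI', hτ₀I, hrel⟩ := hσ
      obtain ⟨u₀, x₀, v⟩ := τ₀
      simp only at ht1 ht2 hτ₀I hrel
      subst ht1; subst ht2
      have hnepv : p ≠ v := by
        intro h
        exact htne (by rw [h])
      refine right_max hc hnepv hpI' hτ₀I hplen ?_ hrel hw0 ?_
      · have := (rel_len₂ htne hc hrel).2
        simp only at this
        omega
      · rw [← hw]; exact hτI
  · by_cases hw0 : w.length = 0
    · obtain ⟨ex, hnil⟩ := Path.exists_nil_of_length w hw0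
      subst ex
      have hnil' : w = Path.nil y := hnil
      rw [hnil', Path.comp_nil] at hw
      rw [hw]
    · exfalso
      obtain ⟨τ₀, c, hc, ht1, ht2, htne, hqI', hτ₀I, hrel⟩ := hτ
      obtain ⟨u₀, y₀, v⟩ := τ₀
      simp only at ht1 ht2 hτ₀I hrel
      subst ht1; subst ht2
      have hnepv : q ≠ v := by
        intro h
        exact htne (by rw [h])
      refine right_max hc hnepv hqI' hτ₀I hqlen ?_ hrel hw0 ?_
      · have := (rel_len₂ htne hc hrel).2
        simp only at this
        omega
      · rw [← hw]; exact hσI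

end HeadInj

section GraphSec

/-- The edge relation generated by a set `E` of arrows. -/
def grel (E : Finset Q.A) : Q.V → Q.V → Prop :=
  fun u v => ∃ a ∈ E, Q.src a = u ∧ Q.tgt a = v

/-- Number of connected components of the subgraph on the arrows in `E`
(counting all vertices). -/
noncomputable def ncomp (E : Finset Q.A) : ℕ := Nat.card (Quot (grel (Q := Q) E))

instance quotFinite (E : Finset Q.A) : Finite (Quot (grel (Q := Q) E)) :=
  Finite.of_surjective (Quot.mk _) Quot.exists_rep

theorem grel_mono {E E' : Finset Q.A} (h : E' ⊆ E) {u v : Q.V} (hr : grel E' u v) :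
    grel E u v := by
  obtain ⟨a, ha, h1, h2⟩ := hr
  exact ⟨a, h ha, h1, h2⟩

/-- Walking along a composable list of arrows connects its endpoints. -/
theorem walk_connect (E : Finset Q.A) :
    ∀ (l : List Q.A) (hne : l ≠ []), l.Chain' (fun a b => Q.src b = Q.tgt a) →
    (∀ a ∈ l, a ∈ E) →
    Quot.mk (grel (Q := Q) E) (Q.src (l.head hne)) = Quot.mk (grel E) (Q.tgt (l.getLast hne)) := by
  intro l
  induction l with
  | nil => intro h; exact absurd rfl h
  | cons a t ih =>
    intro _ hchain hsub
    cases t with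
    | nil =>
      exact Quot.sound ⟨a, hsub a (by simp), rfl, rfl⟩
    | cons b t' =>
      have h1 : Quot.mk (grel E) (Q.src a) = Quot.mk (grel E) (Q.tgt a) :=
        Quot.sound ⟨a, hsub a (by simp), rfl, rfl⟩
      have hchain' := (List.isChain_cons_cons.mp hchain)
      have h2 : Q.src b = Q.tgt a := hchain'.1
      have h3 := ih (by simp) hchain'.2 (fun x hx => hsub x (by simp [hx]))
      rw [List.head_cons] at h3
      rw [List.getLast_cons (by simp)]
      calc Quot.mk (grel E) (Q.src ((a :: b :: t').head (by simp)))
      _ = Quot.mk (grel E) (Q.tgt a) := h1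
      _ = Quot.mk (grel E) (Q.src b) := by rw [h2]
      _ = _ := h3

/-- Abstract decomposition of `EqvGen` for a relation split as `r' ∪ {(u₀, v₀)}`. -/
theorem eqvGen_split {α : Type*} {r r' : α → α → Prop} {u₀ v₀ : α}
    (hsplit : ∀ a b, r a b → r' a b ∨ (a = u₀ ∧ b = v₀)) {x y : α}
    (h : Relation.EqvGen r x y) :
    Relation.EqvGen r' x y ∨
      ((Relation.EqvGen r' x u₀ ∨ Relation.EqvGen r' x v₀) ∧
       (Relation.EqvGen r' y u₀ ∨ Relation.EqvGen r' y v₀)) := by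
  induction h with
  | rel a b hab =>
    rcases hsplit a b hab with h' | ⟨rfl, rfl⟩
    · exact Or.inl (Relation.EqvGen.rel _ _ h')
    · exact Or.inr ⟨Or.inl (Relation.EqvGen.refl _), Or.inr (Relation.EqvGen.refl _)⟩
  | refl a => exact Or.inl (Relation.EqvGen.refl _)
  | symm a b _ ih =>
    rcases ih with h' | ⟨h1, h2⟩
    · exact Or.inl h'.symm
    · exact Or.inr ⟨h2, h1⟩
  | trans a b c _ _ ih1 ih2 =>
    rcases ih1 with h1 | ⟨h1, h2⟩
    · rcases ih2 with h2 | ⟨h3, h4⟩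
      · exact Or.inl (h1.trans _ _ _ h2)
      · refine Or.inr ⟨?_, h4⟩
        rcases h3 with h3 | h3
        · exact Or.inl (h1.trans _ _ _ h3)
        · exact Or.inr (h1.trans _ _ _ h3)
    · rcases ih2 with h3 | ⟨h3, h4⟩
      · refine Or.inr ⟨h1, ?_⟩
        rcases h2 with h2 | h2
        · exact Or.inl (Relation.EqvGen.trans _ _ _ (Relation.EqvGen.symm _ _ h3) h2)
        · exact Or.inr (Relation.EqvGen.trans _ _ _ (Relation.EqvGen.symm _ _ h3) h2)
      · exact Or.inr ⟨h1, h4⟩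

end GraphSec

section NcompSec

/-- The projection between quotients induced by enlarging the relation. -/
noncomputable def qproj {E E' : Finset Q.A} (h : E' ⊆ E) :
    Quot (grel (Q := Q) E') → Quot (grel (Q := Q) E) :=
  Quot.lift (Quot.mk _) (fun _ _ hr => Quot.sound (grel_mono h hr))

@[simp] theorem qproj_mk {E E' : Finset Q.A} (h : E' ⊆ E) (v : Q.V) :
    qproj h (Quot.mk _ v) = Quot.mk _ v := rfl

/-- Removing one edge increases the number of components by at most one. -/
theorem ncomp_erase_le (E : Finset Q.A) (e : Q.A) :
    ncomp (Q := Q) (E.erase e) ≤ ncomp E + 1 := by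
  classical
  set r' := grel (Q := Q) (E.erase e) with hr'
  letI : Fintype (Quot r') := Fintype.ofFinite _
  letI : Fintype (Quot (grel (Q := Q) E)) := Fintype.ofFinite _
  rw [ncomp, ncomp, Nat.card_eq_fintype_card (α := Quot (grel (Q := Q) E)), ← hr',
    Nat.card_eq_fintype_card (α := Quot r')]
  have hsplit : ∀ a b, grel E a b → r' a b ∨ (a = Q.src e ∧ b = Q.tgt e) := by
    intro a b ⟨c, hc, h1, h2⟩
    by_cases hce : c = e
    · subst hce; right; exact ⟨h1.symm, h2.symm⟩
    · left; exact ⟨c, Finset.mem_erase.mpr ⟨hce, hc⟩, h1, h2⟩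
  have hinj : Set.InjOn (qproj (Finset.erase_subset e E))
      ((Finset.univ : Finset (Quot r')).erase (Quot.mk r' (Q.src e)) : Finset (Quot r')) := by
    intro x hx y hy hxy
    obtain ⟨a, rfl⟩ := Quot.exists_rep x
    obtain ⟨b, rfl⟩ := Quot.exists_rep y
    simp only [Finset.coe_erase, Set.mem_diff, Set.mem_singleton_iff] at hx hy
    have hab : Relation.EqvGen (grel E) a b := Quot.eqvGen_exact hxy
    rcases eqvGen_split hsplit hab with h' | ⟨h1, h2⟩
    · exact Quot.eqvGen_sound h'
    · have ha : Quot.mk r' a = Quot.mk r' (Q.tgt e) := by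
        rcases h1 with h1 | h1
        · exact absurd (Quot.eqvGen_sound h1) hx.2
        · exact Quot.eqvGen_sound h1
      have hb : Quot.mk r' b = Quot.mk r' (Q.tgt e) := by
        rcases h2 with h2 | h2
        · exact absurd (Quot.eqvGen_sound h2) hy.2
        · exact Quot.eqvGen_sound h2
      rw [ha, hb]
  have hcard := Finset.card_le_card_of_injOn (qproj (Finset.erase_subset e E))
    (fun a _ => Finset.mem_univ _) hinj
  have h1 : ((Finset.univ : Finset (Quot r')).erase (Quot.mk r' (Q.src e))).card
      = Fintype.card (Quot r') - 1 := by
    rw [Finset.card_erase_of_mem (Finset.mem_univ _), Finset.card_univ]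
  rw [h1, Finset.card_univ] at hcard
  omega

/-- Removing a non-bridge edge does not change the number of components. -/
theorem ncomp_erase_eq (E : Finset Q.A) (e : Q.A)
    (hbridge : Quot.mk (grel (Q := Q) (E.erase e)) (Q.src e) =
      Quot.mk (grel (E.erase e)) (Q.tgt e)) :
    ncomp (Q := Q) (E.erase e) = ncomp E := by
  apply Nat.card_congr
  refine ⟨qproj (Finset.erase_subset e E), Quot.lift (Quot.mk _) ?_, ?_, ?_⟩
  · intro a b ⟨c, hc, h1, h2⟩
    by_cases hce : c = e
    · subst hce; rw [← h1, ← h2]; exact hbridge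
    · exact Quot.sound ⟨c, Finset.mem_erase.mpr ⟨hce, hc⟩, h1, h2⟩
  · intro x; obtain ⟨a, rfl⟩ := Quot.exists_rep x; rfl
  · intro x; obtain ⟨a, rfl⟩ := Quot.exists_rep x; rfl

/-- Monotonicity: passing to a subgraph. -/
theorem ncomp_mono (E : Finset Q.A) : ∀ (E' : Finset Q.A), E' ⊆ E →
    E'.card + ncomp (Q := Q) E' ≤ E.card + ncomp E := by
  classical
  induction E using Finset.strongInduction with
  | _ E ih =>
    intro E' hsub
    by_cases heq : E' = E
    · subst heq; exact le_rfl
    · obtain ⟨e, heE, heE'⟩ := Finset.exists_of_ssubset (lt_of_le_of_ne hsub heq)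
      have hsub' : E' ⊆ E.erase e := fun x hx =>
        Finset.mem_erase.mpr ⟨fun h => heE' (h ▸ hx), hsub hx⟩
      have h1 := ih (E.erase e) (Finset.erase_ssubset heE) E' hsub'
      have h2 := ncomp_erase_le (Q := Q) E e
      have h3 : (E.erase e).card = E.card - 1 := Finset.card_erase_of_mem heE
      have h4 : 1 ≤ E.card := Finset.card_pos.mpr ⟨e, heE⟩
      omega

/-- Vertices untouched by `E` give distinct components. -/
theorem untouched_le_ncomp (E : Finset Q.A) (T : Finset Q.V)
    (hT : ∀ v ∈ T, ∀ a ∈ E, Q.src a ≠ v ∧ Q.tgt a ≠ v) :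
    T.card ≤ ncomp (Q := Q) E := by
  classical
  letI : Fintype (Quot (grel (Q := Q) E)) := Fintype.ofFinite _
  rw [ncomp, Nat.card_eq_fintype_card, ← Finset.card_univ]
  apply Finset.card_le_card_of_injOn (Quot.mk _) (fun a _ => Finset.mem_univ _)
  intro x hx y _ hxy
  have hgen := Quot.eqvGen_exact hxy
  simp only [Finset.mem_coe] at hx
  have key : ∀ a b : Q.V, Relation.EqvGen (grel E) a b → (a ∈ T → a = b) ∧ (b ∈ T → a = b) := by
    intro a b h
    induction h with
    | rel a b hab =>
      obtain ⟨c, hc, h1, h2⟩ := hab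
      constructor
      · intro ha; exact absurd h1 ((hT a ha c hc).1)
      · intro hb; exact absurd h2 ((hT b hb c hc).2)
    | refl a => exact ⟨fun _ => rfl, fun _ => rfl⟩
    | symm a b _ ih => exact ⟨fun h => (ih.2 h).symm, fun h => (ih.1 h).symm⟩
    | trans a b c _ _ ih1 ih2 =>
      constructor
      · intro ha
        have hab := ih1.1 ha
        rw [hab]; exact ih2.1 (hab ▸ ha)
      · intro hc
        have hbc := ih2.2 hc
        rw [← hbc]; exact ih1.2 (hbc ▸ hc)
  exact (key x y hgen).1 hx

end NcompSec

section CoreSec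

variable {ι : Type}

/-- Any occurrence of `e` in the tail of a list gives a consecutive pair `[a, e]`. -/
theorem mem_tail_pair {α : Type*} : ∀ {t : List α} {e c : α}, e ∈ t → ∃ a, [a, e] <:+: (c :: t) := by
  intro t
  induction t with
  | nil => intro e c h; simp at h
  | cons d t' ih =>
    intro e c h
    rcases List.mem_cons.mp h with rfl | h'
    · exact ⟨c, ⟨[], t', rfl⟩⟩
    · obtain ⟨a, ha⟩ := ih (c := d) h'
      exact ⟨a, ha.trans (List.suffix_cons c (d :: t')).isInfix⟩

/-- The consecutive-pairs relation of a system of paths. -/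
def SysRel (S : Finset ι) (fL : ι → Q.A) (rL : ι → List Q.A)
    (fM : ι → Q.A) (rM : ι → List Q.A) (a b : Q.A) : Prop :=
  ∃ i ∈ S, [a, b] <:+: (fL i :: rL i) ∨ [a, b] <:+: (fM i :: rM i)

theorem SysRel.swap {S : Finset ι} {fL rL fM rM} {a b : Q.A}
    (h : SysRel S fM rM fL rL a b) : SysRel S fL rL fM rM a b := by
  obtain ⟨i, hi, h1 | h1⟩ := h
  · exact ⟨i, hi, Or.inr h1⟩
  · exact ⟨i, hi, Or.inl h1⟩

theorem SysRel.mono {S S' : Finset ι} (hS : S' ⊆ S) {fL rL fM rM} {a b : Q.A}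
    (h : SysRel S' fL rL fM rM a b) : SysRel S fL rL fM rM a b := by
  obtain ⟨i, hi, h1⟩ := h
  exact ⟨i, hS hi, h1⟩

/-- The "used edges" predicate of a system of paths. -/
def SysUsed (S : Finset ι) (fL : ι → Q.A) (rL : ι → List Q.A)
    (fM : ι → Q.A) (rM : ι → List Q.A) (e : Q.A) : Prop :=
  ∃ i ∈ S, e ∈ (fL i :: rL i) ∨ e ∈ (fM i :: rM i)

end CoreSec

section CoreB

variable {ι : Type}

set_option maxHeartbeats 1000000 in
/-- Case B of the main counting argument: every used edge has a predecessor. -/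
theorem coreB (E : Finset Q.A) (S : Finset ι) (fL : ι → Q.A) (rL : ι → List Q.A)
    (fM : ι → Q.A) (rM : ι → List Q.A)
    (hchain : ∀ i ∈ S, List.Chain' (fun a b => Q.src b = Q.tgt a) (fL i :: rL i) ∧
      List.Chain' (fun a b => Q.src b = Q.tgt a) (fM i :: rM i))
    (hE : ∀ i ∈ S, ∀ a : Q.A, (a ∈ (fL i :: rL i) ∨ a ∈ (fM i :: rM i)) → a ∈ E)
    (hsrc : ∀ i ∈ S, Q.src (fL i) = Q.src (fM i))
    (hLM : ∀ i ∈ S, ∀ j ∈ S, fL i ≠ fM j)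
    (hdet : ∀ a b b' : Q.A, SysRel S fL rL fM rM a b → SysRel S fL rL fM rM a b' → b = b')
    (hsrcinj : ∀ i ∈ S, ∀ j ∈ S, Q.src (fL i) = Q.src (fL j) → i = j)
    (hall : ∀ e : Q.A, SysUsed S fL rL fM rM e → ∃ a, SysRel S fL rL fM rM a e) :
    S.card + Fintype.card Q.V ≤ E.card + ncomp E := by
  classical
  set Rel := SysRel S fL rL fM rM with hRel
  set Used := SysUsed S fL rL fM rM with hUsed
  -- basic facts about Rel
  have rel_comp : ∀ a b, Rel a b → Q.src b = Q.tgt a := by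
    rintro a b ⟨i, hi, h | h⟩
    · exact (List.isChain_pair (R := fun a b => Q.src b = Q.tgt a)).mp (List.IsChain.infix (hchain i hi).1 h)
    · exact (List.isChain_pair (R := fun a b => Q.src b = Q.tgt a)).mp (List.IsChain.infix (hchain i hi).2 h)
  have rel_used : ∀ a b, Rel a b → Used a ∧ Used b := by
    rintro a b ⟨i, hi, h | h⟩
    · exact ⟨⟨i, hi, Or.inl (h.subset (by simp))⟩, ⟨i, hi, Or.inl (h.subset (by simp))⟩⟩
    · exact ⟨⟨i, hi, Or.inr (h.subset (by simp))⟩, ⟨i, hi, Or.inr (h.subset (by simp))⟩⟩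
  set E'' := E.filter (fun e => Used e) with hE''
  have hE''sub : E'' ⊆ E := Finset.filter_subset _ _
  have used_mem : ∀ e, Used e → e ∈ E'' := by
    intro e he
    obtain ⟨i, hi, h⟩ := he
    exact Finset.mem_filter.mpr ⟨hE i hi e h, ⟨i, hi, h⟩⟩
  -- the predecessor function
  have predf : ∀ e ∈ E'', ∃ a, Rel a e := by
    intro e he
    exact hall e (Finset.mem_filter.mp he).2
  choose pred hpred using predf
  have pred_mem : ∀ (e) (he : e ∈ E''), pred e he ∈ E'' := by
    intro e he
    exact used_mem _ (rel_used _ _ (hpred e he)).1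
  have pred_inj : ∀ (e₁ e₂) (h₁ : e₁ ∈ E'') (h₂ : e₂ ∈ E''),
      pred e₁ h₁ = pred e₂ h₂ → e₁ = e₂ := by
    intro e₁ e₂ h₁ h₂ heq
    exact hdet _ _ _ (heq ▸ hpred e₁ h₁) (hpred e₂ h₂)
  have outedge : ∀ b ∈ E'', ∃ f ∈ E'', Q.src f = Q.tgt b := by
    intro b hb
    obtain ⟨a, ha, hba⟩ := Finset.surj_on_of_inj_on_of_card_le
      (fun e he => pred e he) (fun e he => pred_mem e he) pred_inj le_rfl b hb
    exact ⟨a, ha, rel_comp b a (hba ▸ hpred a ha)⟩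
  -- touched and untouched vertices
  set touched := fun v : Q.V => ∃ a ∈ E'', Q.src a = v ∨ Q.tgt a = v with htouched
  set tFin := Finset.univ.filter touched with htFin
  set uFin := Finset.univ.filter (fun v => ¬ touched v) with huFin
  have hVsplit : tFin.card + uFin.card = Fintype.card Q.V := by
    rw [htFin, huFin, Finset.card_filter_add_card_filter_not, Finset.card_univ]
  have touched_src : ∀ v, touched v → ∃ a ∈ E'', Q.src a = v := by
    rintro v ⟨a, ha, h | h⟩
    · exact ⟨a, ha, h⟩
    · obtain ⟨f, hf, hsf⟩ := outedge a ha
      exact ⟨f, hf, by rw [hsf, h]⟩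
  -- the source vertices of the pairs
  set srcFin := S.image (fun i => Q.src (fL i)) with hsrcFin
  have hsrccard : srcFin.card = S.card := Finset.card_image_of_injOn
    (fun i hi j hj h => hsrcinj i hi j hj h)
  have hsrcsub : srcFin ⊆ tFin := by
    intro v hv
    obtain ⟨i, hi, rfl⟩ := Finset.mem_image.mp hv
    refine Finset.mem_filter.mpr ⟨Finset.mem_univ _, ⟨fL i, ?_, Or.inl rfl⟩⟩
    exact used_mem _ ⟨i, hi, Or.inl (by simp)⟩
  -- fiberwise counting
  have hfib : ∀ v ∈ tFin, 1 + (if v ∈ srcFin then 1 else 0) ≤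
      (E''.filter (fun a => Q.src a = v)).card := by
    intro v hv
    by_cases hvs : v ∈ srcFin
    · obtain ⟨i, hi, hveq⟩ := Finset.mem_image.mp hvs
      have h1 : fL i ∈ E''.filter (fun a => Q.src a = v) :=
        Finset.mem_filter.mpr ⟨used_mem _ ⟨i, hi, Or.inl (by simp)⟩, hveq⟩
      have h2 : fM i ∈ E''.filter (fun a => Q.src a = v) :=
        Finset.mem_filter.mpr ⟨used_mem _ ⟨i, hi, Or.inr (by simp)⟩,
          by rw [← hsrc i hi]; exact hveq⟩
      have h3 : ({fL i, fM i} : Finset Q.A) ⊆ E''.filter (fun a => Q.src a = v) := by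
        intro x hx
        rcases Finset.mem_insert.mp hx with rfl | hx
        · exact h1
        · rw [Finset.mem_singleton.mp hx]; exact h2
      have h4 : ({fL i, fM i} : Finset Q.A).card = 2 :=
        Finset.card_pair (hLM i hi i hi)
      rw [if_pos hvs]
      calc 1 + 1 = 2 := rfl
      _ = ({fL i, fM i} : Finset Q.A).card := h4.symm
      _ ≤ _ := Finset.card_le_card h3
    · rw [if_neg hvs]
      have hv' := (Finset.mem_filter.mp hv).2
      obtain ⟨a, ha, hav⟩ := touched_src v hv'
      have : a ∈ E''.filter (fun a => Q.src a = v) := Finset.mem_filter.mpr ⟨ha, hav⟩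
      simpa using Finset.card_pos.mpr ⟨a, this⟩
  have hcount : S.card + tFin.card ≤ E''.card := by
    have h1 : E''.card = ∑ v ∈ Finset.univ, (E''.filter (fun a => Q.src a = v)).card :=
      Finset.card_eq_sum_card_fiberwise (fun a _ => Finset.mem_univ _)
    have h2 : ∑ v ∈ tFin, (E''.filter (fun a => Q.src a = v)).card ≤
        ∑ v ∈ Finset.univ, (E''.filter (fun a => Q.src a = v)).card :=
      Finset.sum_le_sum_of_subset (Finset.subset_univ _)
    have h3 : ∑ v ∈ tFin, (1 + (if v ∈ srcFin then 1 else 0)) ≤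
        ∑ v ∈ tFin, (E''.filter (fun a => Q.src a = v)).card :=
      Finset.sum_le_sum hfib
    have h4 : ∑ v ∈ tFin, (1 + (if v ∈ srcFin then 1 else 0)) =
        tFin.card + srcFin.card := by
      rw [Finset.sum_add_distrib, Finset.sum_const, smul_eq_mul, mul_one]
      congr 1
      rw [Finset.sum_ite_mem, Finset.inter_eq_right.mpr hsrcsub, Finset.sum_const,
        smul_eq_mul, mul_one]
    omega
  have huntouched : uFin.card ≤ ncomp E'' := by
    apply untouched_le_ncomp
    intro v hv a ha
    have hv' := (Finset.mem_filter.mp hv).2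
    exact ⟨fun h => hv' ⟨a, ha, Or.inl h⟩, fun h => hv' ⟨a, ha, Or.inr h⟩⟩
  have hmono := ncomp_mono E E'' hE''sub
  omega

end CoreB

section CoreMain

variable {ι : Type}

set_option maxHeartbeats 1600000 in
/-- The main counting theorem: a system of binomial-relation path pairs in a quiver
is bounded by the Euler characteristic. -/
theorem coreMain (n : ℕ) : ∀ (E : Finset Q.A) (S : Finset ι) (fL : ι → Q.A)
    (rL : ι → List Q.A) (fM : ι → Q.A) (rM : ι → List Q.A),
    E.card ≤ n →
    (∀ i ∈ S, List.Chain' (fun a b => Q.src b = Q.tgt a) (fL i :: rL i) ∧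
      List.Chain' (fun a b => Q.src b = Q.tgt a) (fM i :: rM i)) →
    (∀ i ∈ S, ∀ a : Q.A, (a ∈ (fL i :: rL i) ∨ a ∈ (fM i :: rM i)) → a ∈ E) →
    (∀ i ∈ S, Q.src (fL i) = Q.src (fM i)) →
    (∀ i ∈ S, Q.tgt ((fL i :: rL i).getLast (by simp)) =
      Q.tgt ((fM i :: rM i).getLast (by simp))) →
    (∀ i ∈ S, ∀ j ∈ S, fL i = fL j → i = j) →
    (∀ i ∈ S, ∀ j ∈ S, fL i ≠ fM j) →
    (∀ i ∈ S, ∀ j ∈ S, fM i = fM j → i = j) →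
    (∀ a b b' : Q.A, SysRel S fL rL fM rM a b → SysRel S fL rL fM rM a b' → b = b') →
    (∀ i ∈ S, ∀ j ∈ S, Q.src (fL i) = Q.src (fL j) → i = j) →
    S.card + Fintype.card Q.V ≤ E.card + ncomp E := by
  classical
  induction n with
  | zero =>
    intro E S fL rL fM rM hcard hchain hE hsrc htgt hLL hLM hMM hdet hsrcinj
    have hS : S = ∅ := by
      by_contra hne
      obtain ⟨i, hi⟩ := Finset.nonempty_iff_ne_empty.mpr hne
      have := hE i hi (fL i) (Or.inl (by simp))
      have hE0 : E = ∅ := Finset.card_eq_zero.mp (Nat.le_zero.mp hcard)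
      rw [hE0] at this
      simp at this
    subst hS
    apply coreB E ∅ fL rL fM rM hchain hE hsrc hLM hdet hsrcinj
    intro e he
    obtain ⟨i, hi, _⟩ := he
    simp at hi
  | succ n ih =>
    intro E S fL rL fM rM hcard hchain hE hsrc htgt hLL hLM hMM hdet hsrcinj
    by_cases hA : ∃ e₀, SysUsed S fL rL fM rM e₀ ∧ ¬∃ a, SysRel S fL rL fM rM a e₀
    · -- Case A: remove the path pair whose head has no predecessor.
      obtain ⟨e₀, hused, hnopred⟩ := hA
      obtain ⟨i₀, hi₀, hocc⟩ := hused
      -- `e₀` is the head of one of the two lists of `i₀`.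
      have hhead : e₀ = fL i₀ ∨ e₀ = fM i₀ := by
        rcases hocc with h | h
        · rcases List.mem_cons.mp h with h' | h'
          · exact Or.inl h'
          · exact absurd (by
              obtain ⟨a, ha⟩ := mem_tail_pair (c := fL i₀) h'
              exact ⟨a, ⟨i₀, hi₀, Or.inl ha⟩⟩) hnopred
        · rcases List.mem_cons.mp h with h' | h'
          · exact Or.inr h'
          · exact absurd (by
              obtain ⟨a, ha⟩ := mem_tail_pair (c := fM i₀) h'
              exact ⟨a, ⟨i₀, hi₀, Or.inr ha⟩⟩) hnopred
      -- a generic sub-proof applicable to both orientations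
      have branch : ∀ (gL : ι → Q.A) (sL : ι → List Q.A) (gM : ι → Q.A) (sM : ι → List Q.A),
          (∀ i ∈ S, List.Chain' (fun a b => Q.src b = Q.tgt a) (gL i :: sL i) ∧
            List.Chain' (fun a b => Q.src b = Q.tgt a) (gM i :: sM i)) →
          (∀ i ∈ S, ∀ a : Q.A, (a ∈ (gL i :: sL i) ∨ a ∈ (gM i :: sM i)) → a ∈ E) →
          (∀ i ∈ S, Q.src (gL i) = Q.src (gM i)) →
          (∀ i ∈ S, Q.tgt ((gL i :: sL i).getLast (by simp)) =
            Q.tgt ((gM i :: sM i).getLast (by simp))) →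
          (∀ i ∈ S, ∀ j ∈ S, gL i = gL j → i = j) →
          (∀ i ∈ S, ∀ j ∈ S, gL i ≠ gM j) →
          (∀ i ∈ S, ∀ j ∈ S, gM i = gM j → i = j) →
          (∀ a b b' : Q.A, SysRel S gL sL gM sM a b → SysRel S gL sL gM sM a b' → b = b') →
          (∀ i ∈ S, ∀ j ∈ S, Q.src (gL i) = Q.src (gL j) → i = j) →
          (¬∃ a, SysRel S gL sL gM sM a e₀) →
          e₀ = gL i₀ →
          S.card + Fintype.card Q.V ≤ E.card + ncomp E := by
        intro gL sL gM sM hchain hE hsrc htgt hLL hLM hMM hdet hsrcinj hnopred he₀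
        -- every list of the system other than `gL i₀ :: sL i₀` avoids `e₀`
        have havoidL : ∀ j ∈ S, j ≠ i₀ → e₀ ∉ (gL j :: sL j) := by
          intro j hj hne hmem
          rcases List.mem_cons.mp hmem with h' | h'
          · exact hne (hLL j hj i₀ hi₀ (h'.symm.trans he₀))
          · obtain ⟨a, ha⟩ := mem_tail_pair (c := gL j) h'
            exact hnopred ⟨a, ⟨j, hj, Or.inl ha⟩⟩
        have havoidM : ∀ j ∈ S, e₀ ∉ (gM j :: sM j) := by
          intro j hj hmem
          rcases List.mem_cons.mp hmem with h' | h'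
          · exact hLM i₀ hi₀ j hj (he₀.symm.trans h')
          · obtain ⟨a, ha⟩ := mem_tail_pair (c := gM j) h'
            exact hnopred ⟨a, ⟨j, hj, Or.inr ha⟩⟩
        have havoidtail : e₀ ∉ sL i₀ := by
          intro hmem
          obtain ⟨a, ha⟩ := mem_tail_pair (c := gL i₀) hmem
          exact hnopred ⟨a, ⟨i₀, hi₀, Or.inl ha⟩⟩
        have he₀E : e₀ ∈ E := hE i₀ hi₀ e₀ (Or.inl (by rw [he₀]; simp))
        -- connectivity of the endpoints of `e₀` in `E.erase e₀`
        have hconn : Quot.mk (grel (Q := Q) (E.erase e₀)) (Q.src e₀) =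
            Quot.mk (grel (E.erase e₀)) (Q.tgt e₀) := by
          have hM : ∀ a ∈ (gM i₀ :: sM i₀), a ∈ E.erase e₀ := by
            intro a ha
            refine Finset.mem_erase.mpr ⟨?_, hE i₀ hi₀ a (Or.inr ha)⟩
            intro h; subst h; exact havoidM i₀ hi₀ ha
          have walkM := walk_connect (E.erase e₀) (gM i₀ :: sM i₀) (by simp)
            (hchain i₀ hi₀).2 hM
          rw [List.head_cons] at walkM
          have hsrcM : Q.src e₀ = Q.src (gM i₀) := by rw [he₀]; exact hsrc i₀ hi₀
          cases hsL : sL i₀ with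
          | nil =>
            have htgtL := htgt i₀ hi₀
            rw [hsL] at htgtL
            simp only [List.getLast_singleton] at htgtL
            rw [hsrcM, walkM, ← htgtL, he₀]
          | cons b t =>
            have hL : ∀ a ∈ (b :: t), a ∈ E.erase e₀ := by
              intro a ha
              refine Finset.mem_erase.mpr ⟨?_, hE i₀ hi₀ a (Or.inl (by
                rw [hsL]; exact List.mem_cons_of_mem _ ha))⟩
              intro h; subst h
              exact havoidtail (hsL ▸ ha)
            have walkL := walk_connect (E.erase e₀) (b :: t) (by simp)
              (by
                have := (hchain i₀ hi₀).1
                rw [hsL] at this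
                exact this.tail) hL
            rw [List.head_cons] at walkL
            have hcomp : Q.src b = Q.tgt e₀ := by
              have := (hchain i₀ hi₀).1
              rw [hsL] at this
              rw [he₀]
              exact (List.isChain_cons_cons.mp this).1
            have htgtL := htgt i₀ hi₀
            have hgl : (gL i₀ :: sL i₀).getLast (by simp) = (b :: t).getLast (by simp) := by
              simp only [hsL]
              rw [List.getLast_cons (by simp)]
            rw [hgl] at htgtL
            calc Quot.mk (grel (E.erase e₀)) (Q.src e₀)
                = Quot.mk (grel (E.erase e₀)) (Q.src (gM i₀)) := by rw [hsrcM]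
              _ = Quot.mk (grel (E.erase e₀)) (Q.tgt ((gM i₀ :: sM i₀).getLast (by simp))) :=
                  walkM
              _ = Quot.mk (grel (E.erase e₀)) (Q.tgt ((b :: t).getLast (by simp))) := by
                  rw [← htgtL]
              _ = Quot.mk (grel (E.erase e₀)) (Q.src b) := walkL.symm
              _ = Quot.mk (grel (E.erase e₀)) (Q.tgt e₀) := by rw [hcomp]
        have hncomp := ncomp_erase_eq E e₀ hconn
        -- apply the induction hypothesis to the reduced system
        have hrec := ih (E.erase e₀) (S.erase i₀) gL sL gM sM
          (by
            rw [Finset.card_erase_of_mem he₀E]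
            omega)
          (fun i hi => hchain i (Finset.mem_of_mem_erase hi))
          (by
            intro i hi a ha
            have hiS := Finset.mem_of_mem_erase hi
            have hine := Finset.ne_of_mem_erase hi
            refine Finset.mem_erase.mpr ⟨?_, hE i hiS a ha⟩
            intro h; subst h
            rcases ha with ha | ha
            · exact havoidL i hiS hine ha
            · exact havoidM i hiS ha)
          (fun i hi => hsrc i (Finset.mem_of_mem_erase hi))
          (fun i hi => htgt i (Finset.mem_of_mem_erase hi))
          (fun i hi j hj h => hLL i (Finset.mem_of_mem_erase hi) j (Finset.mem_of_mem_erase hj) h)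
          (fun i hi j hj => hLM i (Finset.mem_of_mem_erase hi) j (Finset.mem_of_mem_erase hj))
          (fun i hi j hj h => hMM i (Finset.mem_of_mem_erase hi) j (Finset.mem_of_mem_erase hj) h)
          (fun a b b' h1 h2 => hdet a b b' (h1.mono (Finset.erase_subset _ _))
            (h2.mono (Finset.erase_subset _ _)))
          (fun i hi j hj h =>
            hsrcinj i (Finset.mem_of_mem_erase hi) j (Finset.mem_of_mem_erase hj) h)
        rw [Finset.card_erase_of_mem he₀E, hncomp] at hrec
        rw [Finset.card_erase_of_mem hi₀] at hrec
        have hS1 : 1 ≤ S.card := Finset.card_pos.mpr ⟨i₀, hi₀⟩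
        have hE1 : 1 ≤ E.card := Finset.card_pos.mpr ⟨e₀, he₀E⟩
        omega
      rcases hhead with he₀ | he₀
      · exact branch fL rL fM rM hchain hE hsrc htgt hLL hLM hMM hdet hsrcinj hnopred he₀
      · refine branch fM rM fL rL (fun i hi => ⟨(hchain i hi).2, (hchain i hi).1⟩)
          (fun i hi a ha => hE i hi a ha.symm)
          (fun i hi => (hsrc i hi).symm)
          (fun i hi => (htgt i hi).symm)
          hMM
          (fun i hi j hj h => hLM j hj i hi h.symm)
          hLL
          (fun a b b' h1 h2 => hdet a b b' h1.swap h2.swap)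
          (fun i hi j hj h => hsrcinj i hi j hj (by
            rw [hsrc i hi, hsrc j hj]; exact h))
          (fun ⟨a, ha⟩ => hnopred ⟨a, ha.swap⟩)
          he₀
    · -- Case B
      apply coreB E S fL rL fM rM hchain hE hsrc hLM hdet hsrcinj
      intro e he
      by_contra hno
      exact hA ⟨e, he, hno⟩

end CoreMain

section Helpers

theorem arrows_chain' {u v : Q.V} (p : Path Q u v) :
    List.Chain' (fun a b => Q.src b = Q.tgt a) p.arrows := by
  induction p with
  | nil => simp [Path.arrows, List.Chain', List.isChain_nil]
  | cons a p ih =>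
    show List.Chain' _ (a :: p.arrows)
    rw [show List.Chain' _ (a :: p.arrows) ↔ _ from List.isChain_cons]
    refine ⟨?_, ih⟩
    intro y hy
    cases harr : p.arrows with
    | nil => rw [harr] at hy; simp at hy
    | cons c t =>
      rw [harr] at hy
      simp only [List.head?_cons, Option.mem_def, Option.some.injEq] at hy
      obtain ⟨e, _, _, _⟩ := Path.exists_cons p harr
      rw [← hy]
      exact e.symm

theorem src_head {u v : Q.V} (p : Path Q u v) {a : Q.A} {t : List Q.A}
    (h : p.arrows = a :: t) : u = Q.src a := by
  obtain ⟨e, _, _, _⟩ := Path.exists_cons p h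
  exact e

theorem tgt_last {u v : Q.V} (p : Path Q u v) {l : Q.A} {t : List Q.A}
    (h : p.arrows = t ++ [l]) : Q.tgt l = v := by
  obtain ⟨e, _, _, _⟩ := Path.exists_snoc p h
  exact e

theorem getLast_eq_of_eq {α : Type*} {l l' : List α} (h : l = l') (h1 : l ≠ []) (h2 : l' ≠ []) :
    l.getLast h1 = l'.getLast h2 := by subst h; rfl

theorem tgt_getLast {u v : Q.V} (p : Path Q u v) (h : p.arrows ≠ []) :
    Q.tgt (p.arrows.getLast h) = v :=
  tgt_last p (List.dropLast_append_getLast h).symm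

end Helpers

section Bridge

variable {k : Type} [Field k]

/-- The `u`-path of a binomial relation as a bundled path. -/
def BinRel.sigU {J : AdmissibleIdeal k Q} (r : BinRel J) : PathsSigma Q := ⟨r.s, r.t, r.u⟩

/-- The `v`-path of a binomial relation as a bundled path. -/
def BinRel.sigV {J : AdmissibleIdeal k Q} (r : BinRel J) : PathsSigma Q := ⟨r.s, r.t, r.v⟩

variable {SB : SpecialBiserial k Q}

theorem sig_ne (r : BinRel SB.toAdmissibleIdeal) : r.sigV ≠ r.sigU := by
  intro h
  have h' : (⟨r.s, ⟨r.t, r.v⟩⟩ : Σ u : Q.V, Σ w : Q.V, Path Q u w) = ⟨r.s, ⟨r.t, r.u⟩⟩ := h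
  obtain ⟨h1, h2⟩ := Sigma.ext_iff.mp h'
  obtain ⟨h3, h4⟩ := Sigma.ext_iff.mp (eq_of_heq h2)
  exact r.u_ne_v (eq_of_heq h4).symm

theorem relV (r : BinRel SB.toAdmissibleIdeal) :
    pvec k r.v - (r.coef)⁻¹ • pvec k r.u ∈ SB.I := by
  have heq : pvec k r.v - (r.coef)⁻¹ • pvec k r.u =
      (-(r.coef)⁻¹) • (pvec k r.u - r.coef • pvec k r.v) := by
    rw [smul_sub, smul_smul, neg_mul, inv_mul_cancel₀ r.coef_ne, neg_smul, neg_smul,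
      one_smul, sub_neg_eq_add, sub_eq_neg_add]
  rw [heq]
  exact Submodule.smul_mem _ _ r.rel_mem

theorem sigU_paired (r : BinRel SB.toAdmissibleIdeal) : Paired SB r.sigU :=
  ⟨r.sigV, r.coef, r.coef_ne, rfl, rfl, sig_ne r, r.u_not_mem, r.v_not_mem, r.rel_mem⟩

theorem sigV_paired (r : BinRel SB.toAdmissibleIdeal) : Paired SB r.sigV :=
  ⟨r.sigU, (r.coef)⁻¹, inv_ne_zero r.coef_ne, rfl, rfl, (sig_ne r).symm, r.v_not_mem,
    r.u_not_mem, relV r⟩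

theorem Paired.arrows_ne {σ : PathsSigma Q} (h : Paired SB σ) :
    (Sigma.snd (Sigma.snd σ)).arrows ≠ [] := by
  have h2 := h.len
  intro h0
  rw [← Path.length_eq_arrows, h0] at h2
  simp at h2

end Bridge
/-- for a special biserial bound quiver, `dim_k S ≤ χ(Q)`, i.e.
`dim_k S + |Q₀| ≤ |Q₁| + N`. -/
theorem stmt7 {k : Type} [Field k] {Q : FQuiver} (SB : SpecialBiserial k Q)
    (R : Set (BinRel SB.toAdmissibleIdeal))
    (hgen : Generates SB.toAdmissibleIdeal R) :
    Module.finrank k ↥(Smod SB.toAdmissibleIdeal R) + Fintype.card Q.V ≤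
      Fintype.card Q.A + numComponents Q := by
  classical
  obtain ⟨b, hbs, hspan, hli⟩ := exists_linearIndependent k
    ((fun r : BinRel SB.toAdmissibleIdeal =>
      (Submodule.Quotient.mk (pvec k r.u) : PAlg k Q ⧸ SB.toAdmissibleIdeal.I)) '' R)
  have hchoice : ∀ x : b, ∃ r : BinRel SB.toAdmissibleIdeal,
      (Submodule.Quotient.mk (pvec k r.u) : PAlg k Q ⧸ SB.toAdmissibleIdeal.I) = (x : _) := by
    intro x
    obtain ⟨r, _, hrx⟩ := hbs x.2
    exact ⟨r, hrx⟩
  choose rb hrbx using hchoice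
  -- the class of the `v`-side
  have hclassQ : ∀ x : b, (Submodule.Quotient.mk (pvec k (rb x).v) :
      PAlg k Q ⧸ SB.toAdmissibleIdeal.I) = ((rb x).coef)⁻¹ • (x : _) := by
    intro x
    have h0 : (Submodule.Quotient.mk (pvec k (rb x).v - ((rb x).coef)⁻¹ • pvec k (rb x).u) :
        PAlg k Q ⧸ SB.toAdmissibleIdeal.I) = 0 :=
      (Submodule.Quotient.mk_eq_zero _).mpr (relV (rb x))
    rw [Submodule.Quotient.mk_sub, Submodule.Quotient.mk_smul, sub_eq_zero] at h0
    rw [h0, hrbx]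
  -- linear independence consequences
  have hnonprop : ∀ (x y : b) (c : k), x ≠ y → (x : PAlg k Q ⧸ SB.toAdmissibleIdeal.I) ≠ c • (y : _) := by
    intro x y c hxy heq
    have h0 : Finsupp.linearCombination k (Subtype.val : b → PAlg k Q ⧸ SB.toAdmissibleIdeal.I)
        (Finsupp.single x 1 - Finsupp.single y c) = 0 := by
      rw [map_sub, Finsupp.linearCombination_single, Finsupp.linearCombination_single,
        one_smul, heq, sub_self]
    have h1 := linearIndependent_iff.mp hli _ h0
    have h2 := DFunLike.congr_fun h1 x
    rw [Finsupp.sub_apply, Finsupp.single_eq_same, Finsupp.single_eq_of_ne' (Ne.symm hxy)] at h2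
    simp at h2
  -- `mk ∘ single` as a function on bundled paths
  set msig : PathsSigma Q → PAlg k Q ⧸ SB.toAdmissibleIdeal.I :=
    fun σ => Submodule.Quotient.mk (Finsupp.single σ (1 : k)) with hmsig
  have hmsigU : ∀ x : b, msig ((rb x).sigU) = (x : _) := fun x => hrbx x
  have hmsigV : ∀ x : b, msig ((rb x).sigV) = ((rb x).coef)⁻¹ • (x : _) := fun x => hclassQ x
  -- distinctness of the bundled paths
  have hPP : ∀ x y : b, (rb x).sigU = (rb y).sigU → x = y := by
    intro x y h
    apply Subtype.ext
    rw [← hmsigU x, ← hmsigU y, h]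
  have hPQ : ∀ x y : b, (rb x).sigU = (rb y).sigV → False := by
    intro x y h
    by_cases hxy : x = y
    · subst hxy; exact sig_ne (rb x) h.symm
    · apply hnonprop x y ((rb y).coef)⁻¹ hxy
      rw [← hmsigU x, ← hmsigV y, h]
  have hQQ : ∀ x y : b, (rb x).sigV = (rb y).sigV → x = y := by
    intro x y h
    by_contra hxy
    have hval : ((rb x).coef)⁻¹ • (x : PAlg k Q ⧸ SB.toAdmissibleIdeal.I) =
        ((rb y).coef)⁻¹ • (y : _) := by
      rw [← hmsigV x, ← hmsigV y, h]
    apply hnonprop x y ((rb x).coef * ((rb y).coef)⁻¹) hxy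
    have h2 := congrArg (fun z : PAlg k Q ⧸ SB.toAdmissibleIdeal.I => (rb x).coef • z) hval
    rw [smul_smul, mul_inv_cancel₀ (rb x).coef_ne, one_smul, smul_smul] at h2
    exact h2
  -- arrow lists
  have hPne : ∀ x : b, (Sigma.snd (Sigma.snd ((rb x).sigU))).arrows ≠ [] :=
    fun x => (sigU_paired (rb x)).arrows_ne
  have hQne : ∀ x : b, (Sigma.snd (Sigma.snd ((rb x).sigV))).arrows ≠ [] :=
    fun x => (sigV_paired (rb x)).arrows_ne
  set fP : b → Q.A := fun x => (Sigma.snd (Sigma.snd ((rb x).sigU))).arrows.head (hPne x) with hfP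
  set rP : b → List Q.A := fun x => (Sigma.snd (Sigma.snd ((rb x).sigU))).arrows.tail with hrP
  set fQ : b → Q.A := fun x => (Sigma.snd (Sigma.snd ((rb x).sigV))).arrows.head (hQne x) with hfQ
  set rQ : b → List Q.A := fun x => (Sigma.snd (Sigma.snd ((rb x).sigV))).arrows.tail with hrQ
  have harrP : ∀ x : b, (Sigma.snd (Sigma.snd ((rb x).sigU))).arrows = fP x :: rP x :=
    fun x => (List.cons_head_tail (hPne x)).symm
  have harrQ : ∀ x : b, (Sigma.snd (Sigma.snd ((rb x).sigV))).arrows = fQ x :: rQ x :=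
    fun x => (List.cons_head_tail (hQne x)).symm
  have hheadP : ∀ x : b, (Sigma.snd (Sigma.snd ((rb x).sigU))).arrows.head? = some (fP x) :=
    fun x => by rw [harrP x]; rfl
  have hheadQ : ∀ x : b, (Sigma.snd (Sigma.snd ((rb x).sigV))).arrows.head? = some (fQ x) :=
    fun x => by rw [harrQ x]; rfl
  -- head injectivity
  have hfPP : ∀ x y : b, fP x = fP y → (rb x).sigU = (rb y).sigU := by
    intro x y h
    apply paired_head_inj (sigU_paired (rb x)) (sigU_paired (rb y))
    rw [hheadP x, hheadP y, h]
  have hfPQ : ∀ x y : b, fP x = fQ y → (rb x).sigU = (rb y).sigV := by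
    intro x y h
    apply paired_head_inj (sigU_paired (rb x)) (sigV_paired (rb y))
    rw [hheadP x, hheadQ y, h]
  have hfQQ : ∀ x y : b, fQ x = fQ y → (rb x).sigV = (rb y).sigV := by
    intro x y h
    apply paired_head_inj (sigV_paired (rb x)) (sigV_paired (rb y))
    rw [hheadQ x, hheadQ y, h]
  -- finiteness of `b`
  have hbfin : Finite b := by
    apply Finite.of_injective fP
    intro x y h
    exact hPP x y (hfPP x y h)
  letI : Fintype b := Fintype.ofFinite _
  -- sources and targets
  have hsrcP : ∀ x : b, (rb x).s = Q.src (fP x) := fun x => src_head _ (harrP x)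
  have hsrcQ : ∀ x : b, (rb x).s = Q.src (fQ x) := fun x => src_head _ (harrQ x)
  have htgtP : ∀ x : b, Q.tgt ((fP x :: rP x).getLast (by simp)) = (rb x).t := by
    intro x
    have e1 : (fP x :: rP x).getLast (by simp) =
        (Sigma.snd (Sigma.snd ((rb x).sigU))).arrows.getLast (hPne x) :=
      getLast_eq_of_eq (harrP x).symm _ _
    rw [e1]
    exact tgt_getLast _ (hPne x)
  have htgtQ : ∀ x : b, Q.tgt ((fQ x :: rQ x).getLast (by simp)) = (rb x).t := by
    intro x
    have e1 : (fQ x :: rQ x).getLast (by simp) =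
        (Sigma.snd (Sigma.snd ((rb x).sigV))).arrows.getLast (hQne x) :=
      getLast_eq_of_eq (harrQ x).symm _ _
    rw [e1]
    exact tgt_getLast _ (hQne x)
  -- the main combinatorial bound
  have hcore := coreMain (Q := Q) (ι := b) (Finset.univ : Finset Q.A).card Finset.univ
    Finset.univ fP rP fQ rQ le_rfl
    (by
      intro i _
      constructor
      · rw [← harrP i]; exact arrows_chain' _
      · rw [← harrQ i]; exact arrows_chain' _)
    (fun i _ a _ => Finset.mem_univ a)
    (fun i _ => by rw [← hsrcP i, ← hsrcQ i])
    (fun i _ => by rw [htgtP i, htgtQ i])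
    (fun i _ j _ h => hPP i j (hfPP i j h))
    (fun i _ j _ h => hPQ i j (hfPQ i j h))
    (fun i _ j _ h => hQQ i j (hfQQ i j h))
    (by
      intro a c c' h1 h2
      obtain ⟨i, _, hi⟩ := h1
      obtain ⟨j, _, hj⟩ := h2
      have e1 : ∃ h : Q.src c = Q.tgt a, pvec k (comp2 a c h) ∉ SB.I := by
        rcases hi with hi | hi
        · exact pair_extract (sigU_paired (rb i)).notMem (by rw [harrP i]; exact hi)
        · exact pair_extract (sigV_paired (rb i)).notMem (by rw [harrQ i]; exact hi)
      have e2 : ∃ h : Q.src c' = Q.tgt a, pvec k (comp2 a c' h) ∉ SB.I := by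
        rcases hj with hj | hj
        · exact pair_extract (sigU_paired (rb j)).notMem (by rw [harrP j]; exact hj)
        · exact pair_extract (sigV_paired (rb j)).notMem (by rw [harrQ j]; exact hj)
      obtain ⟨hc1, hn1⟩ := e1
      obtain ⟨hc2, hn2⟩ := e2
      exact SB.unique_succ a c c' hc1 hc2 hn1 hn2)
    (by
      intro i _ j _ h
      by_contra hij
      -- three distinct arrows with the same source
      have d1 : fP i ≠ fQ i := by
        intro hd
        exact hPQ i i (hfPQ i i hd)
      have d2 : fP i ≠ fP j := by
        intro hd
        exact hij (hPP i j (hfPP i j hd))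
      have d3 : fQ i ≠ fP j := by
        intro hd
        exact hPQ j i (hfPQ j i hd.symm)
      have e2 : Q.src (fQ i) = Q.src (fP i) := by rw [← hsrcP i, ← hsrcQ i]
      have e3 : Q.src (fP j) = Q.src (fP i) := h.symm
      have hcard3 : ({⟨fP i, rfl⟩, ⟨fQ i, e2⟩, ⟨fP j, e3⟩} :
          Finset {a : Q.A // Q.src a = Q.src (fP i)}).card = 3 := by
        apply Finset.card_eq_three.mpr
        refine ⟨_, _, _, ?_, ?_, ?_, rfl⟩
        · intro hc; exact d1 (congrArg Subtype.val hc)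
        · intro hc; exact d2 (congrArg Subtype.val hc)
        · intro hc; exact d3 (congrArg Subtype.val hc)
      have hle := Finset.card_le_univ ({⟨fP i, rfl⟩, ⟨fQ i, e2⟩, ⟨fP j, e3⟩} :
          Finset {a : Q.A // Q.src a = Q.src (fP i)})
      rw [hcard3] at hle
      have := SB.src_card (Q.src (fP i))
      omega)
  -- identify the pieces
  have hncomp : ncomp (Q := Q) Finset.univ = numComponents Q := by
    have hrel : grel (Q := Q) Finset.univ =
        (fun u v : Q.V => ∃ a : Q.A, Q.src a = u ∧ Q.tgt a = v) := by
      funext u v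
      apply propext
      exact ⟨fun ⟨a, _, h1, h2⟩ => ⟨a, h1, h2⟩, fun ⟨a, h1, h2⟩ => ⟨a, Finset.mem_univ a, h1, h2⟩⟩
    rw [ncomp, hrel, numComponents]
  have hfinrank : Module.finrank k ↥(Smod SB.toAdmissibleIdeal R) = Fintype.card b := by
    have h1 : Smod SB.toAdmissibleIdeal R = Submodule.span k b := by
      rw [Smod, ← hspan]
    rw [h1, finrank_span_set_eq_card hli, Set.toFinset_card]
  rw [Finset.card_univ, Finset.card_univ, hncomp] at hcore
  rw [hfinrank]
  exact hcore

end FQuiver
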